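/- Let G be a graph in which for every vertex u, the set X_u = {v ≠ u : |N(u) ∩ N(v)| > D} has size less than m. If every vertex of G has degree at least δ with δ ≥ 2(ℓ·D + ℓ·m + ℓ + 1), then for every vertex u and every 1 ≤ s ≤ ℓ, the number of induced paths of length s starting at u is at least (δ/2)^s. -/
import Mathlib

open Finset

def IsInducedPath {V : Type*} (G : SimpleGraph V) (s : ℕ) (p : Fin (s + 1) → V) : Prop :=
  Function.Injective p ∧
  (∀ i : Fin s, G.Adj (p i.castSucc) (p i.succ)) ∧
  (∀ i j : Fin (s + 1), (i : ℕ) + 2 ≤ (j : ℕ) → ¬ G.Adj (p i) (p j))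

namespace MIPaux

variable {V : Type*} [Fintype V] [DecidableEq V] (G : SimpleGraph V) [DecidableRel G.Adj]
  (D : ℕ) (u : V)

/-- vertices with many common neighbours with `w` -/
def Xfin (w : V) : Finset V :=
  univ.filter (fun v => v ≠ w ∧ D < (G.neighborFinset w ∩ G.neighborFinset v).card)

def GoodPred (s : ℕ) (p : Fin (s + 1) → V) : Prop :=
  p 0 = u ∧ IsInducedPath G s p ∧
    ∀ i : Fin (s + 1), i ≠ Fin.last s →
      (G.neighborFinset (p i) ∩ G.neighborFinset (p (Fin.last s))).card ≤ D

noncomputable instance : ∀ s, DecidablePred (GoodPred G D u s) := fun _ _ =>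
  Classical.propDecidable _

noncomputable def Good (s : ℕ) : Finset (Fin (s + 1) → V) :=
  univ.filter (GoodPred G D u s)

/-- allowed extensions of a path -/
def Ext (s : ℕ) (q : Fin (s + 1) → V) : Finset V :=
  (G.neighborFinset (q (Fin.last s))) \
    ((univ.image q) ∪
     ((univ : Finset (Fin s)).biUnion fun i => G.neighborFinset (q i.castSucc)) ∪
     ((univ : Finset (Fin (s + 1))).biUnion fun i => Xfin G D (q i)))

lemma snoc_mem_good {s : ℕ} {q : Fin (s + 1) → V} (hq : q ∈ Good G D u s)
    {v : V} (hv : v ∈ Ext G D s q) : Fin.snoc q v ∈ Good G D u (s + 1) := by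
  simp only [Good, GoodPred, mem_filter, mem_univ, true_and] at hq ⊢
  obtain ⟨h0, ⟨hinj, hadj, hchord⟩, _hextra⟩ := hq
  simp only [Ext, mem_sdiff, mem_union, mem_image, mem_biUnion, mem_univ, true_and, not_or,
    not_exists, SimpleGraph.mem_neighborFinset, Xfin, mem_filter, not_and, not_lt] at hv
  obtain ⟨hadjv, ⟨hne, hnadj⟩, hXv⟩ := hv
  have hne' : ∀ i, q i ≠ v := hne
  refine ⟨?_, ⟨?_, ?_, ?_⟩, ?_⟩
  · rw [show (0 : Fin (s+2)) = Fin.castSucc 0 from rfl, Fin.snoc_castSucc]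
    exact h0
  · intro i j h
    induction i using Fin.lastCases with
    | last => induction j using Fin.lastCases with
      | last => rfl
      | cast j =>
        rw [Fin.snoc_last, Fin.snoc_castSucc] at h
        exact absurd h.symm (hne' j)
    | cast i => induction j using Fin.lastCases with
      | last =>
        rw [Fin.snoc_last, Fin.snoc_castSucc] at h
        exact absurd h (hne' i)
      | cast j =>
        rw [Fin.snoc_castSucc, Fin.snoc_castSucc] at h
        rw [hinj h]
  · intro i
    induction i using Fin.lastCases with
    | last =>
      rw [Fin.succ_last, Fin.snoc_last, Fin.snoc_castSucc]
      exact hadjv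
    | cast k =>
      rw [Fin.succ_castSucc, Fin.snoc_castSucc, Fin.snoc_castSucc]
      exact hadj k
  · intro i j hij
    induction j using Fin.lastCases with
    | last =>
      have hi : (i : ℕ) < s := by
        have := Fin.val_last (s+1) ▸ hij; omega
      have hieq : i = Fin.castSucc (Fin.castSucc ⟨(i : ℕ), hi⟩) := by
        apply Fin.ext; simp
      rw [hieq, Fin.snoc_last, Fin.snoc_castSucc]
      exact hnadj ⟨(i : ℕ), hi⟩
    | cast j =>
      have hi : (i : ℕ) < s + 1 := by
        have hj : (j : ℕ) < s + 1 := j.isLt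
        have : (i : ℕ) + 2 ≤ (j : ℕ) := by simpa using hij
        omega
      have hieq : i = Fin.castSucc ⟨(i : ℕ), hi⟩ := by apply Fin.ext; simp
      rw [hieq, Fin.snoc_castSucc, Fin.snoc_castSucc]
      exact hchord ⟨(i : ℕ), hi⟩ j (by simpa using hij)
  · intro i hi
    have hi' : (i : ℕ) < s + 1 := by
      rcases Fin.lt_or_eq_of_le (Fin.le_last i) with h | h
      · exact h
      · exact absurd h hi
    have hieq : i = Fin.castSucc ⟨(i : ℕ), hi'⟩ := by apply Fin.ext; simp
    rw [hieq, Fin.snoc_last, Fin.snoc_castSucc]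
    exact hXv ⟨(i : ℕ), hi'⟩ (fun h => hne' _ h.symm)

lemma card_ext_ge {m : ℕ} (hX : ∀ w : V,
      ({v : V | v ≠ w ∧ D < (G.neighborFinset w ∩ G.neighborFinset v).card} : Set V).ncard < m)
    {s : ℕ} {q : Fin (s + 1) → V} (hq : q ∈ Good G D u s) :
    (G.degree (q (Fin.last s)) : ℝ) - (s * D + (s + 1) + (s + 1) * (m - 1) : ℕ) ≤
      ((Ext G D s q).card : ℝ) := by
  have hXfin : ∀ w : V, (Xfin G D w).card < m := by
    intro w
    have := hX w
    rwa [Set.ncard_eq_toFinset_card', Set.toFinset_setOf] at this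
  simp only [Good, GoodPred, mem_filter, mem_univ, true_and] at hq
  obtain ⟨-, -, hextra⟩ := hq
  set N := G.neighborFinset (q (Fin.last s)) with hN
  set A := (univ : Finset (Fin (s+1))).image q with hA'
  set B := (univ : Finset (Fin s)).biUnion (fun i => G.neighborFinset (q i.castSucc)) with hB'
  set C := (univ : Finset (Fin (s+1))).biUnion (fun i => Xfin G D (q i)) with hC'
  have hsub : N ∩ (A ∪ B ∪ C) ⊆ A ∪ (N ∩ B) ∪ C := by
    intro x hx; simp only [mem_inter, mem_union] at hx ⊢; tauto
  have hA : A.card ≤ s + 1 := le_trans card_image_le (by simp)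
  have hB : (N ∩ B).card ≤ s * D := by
    rw [hB', inter_biUnion]
    refine le_trans card_biUnion_le ?_
    refine le_trans (Finset.sum_le_card_nsmul _ _ D ?_) (by simp [mul_comm])
    intro i _
    rw [inter_comm]
    exact hextra i.castSucc (Fin.castSucc_lt_last i).ne
  have hC : C.card ≤ (s + 1) * (m - 1) := by
    refine le_trans card_biUnion_le ?_
    refine le_trans (Finset.sum_le_card_nsmul _ _ (m - 1) ?_) (by simp [mul_comm])
    intro i _
    have := hXfin (q i)
    omega
  have key : N.card ≤ (Ext G D s q).card + (s * D + (s + 1) + (s + 1) * (m - 1)) := by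
    have h1 := Finset.card_sdiff_add_card_inter N (A ∪ B ∪ C)
    have h2 : (N ∩ (A ∪ B ∪ C)).card ≤ s * D + (s + 1) + (s + 1) * (m - 1) := by
      refine le_trans (card_le_card hsub) (le_trans (card_union_le _ _) ?_)
      have := card_union_le A (N ∩ B)
      omega
    have hE : Ext G D s q = N \ (A ∪ B ∪ C) := rfl
    rw [← hE] at h1
    omega
  have hdeg : G.degree (q (Fin.last s)) = N.card := rfl
  have : (G.degree (q (Fin.last s)) : ℝ) ≤
      ((Ext G D s q).card : ℝ) + ((s * D + (s + 1) + (s + 1) * (m - 1) : ℕ) : ℝ) := by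
    rw [hdeg]
    exact_mod_cast key
  linarith

lemma step {m ℓ : ℕ} {δ : ℝ}
    (hX : ∀ w : V,
      ({v : V | v ≠ w ∧ D < (G.neighborFinset w ∩ G.neighborFinset v).card} : Set V).ncard < m)
    (hdeg : ∀ v : V, δ ≤ (G.degree v : ℝ))
    (hδ : 2 * ((ℓ : ℝ) * D + (ℓ : ℝ) * m + ℓ + 1) ≤ δ)
    {s : ℕ} (hs : s + 1 ≤ ℓ) :
    (δ / 2) * ((Good G D u s).card : ℝ) ≤ ((Good G D u (s + 1)).card : ℝ) := by
  have hm : 1 ≤ m := by have := hX u; omega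
  -- each good path has many extensions
  have hext : ∀ q ∈ Good G D u s, (δ / 2 : ℝ) ≤ ((Ext G D s q).card : ℝ) := by
    intro q hq
    have h1 := card_ext_ge G D u hX hq
    have h2 := hdeg (q (Fin.last s))
    have hbadn : s * D + (s + 1) + (s + 1) * (m - 1) ≤ ℓ * D + ℓ + ℓ * m := by
      have hD : s * D ≤ ℓ * D := Nat.mul_le_mul_right _ (by omega)
      have hM : (s + 1) * (m - 1) ≤ ℓ * m := Nat.mul_le_mul (by omega) (by omega)
      omega
    have hbad : ((s * D + (s + 1) + (s + 1) * (m - 1) : ℕ) : ℝ) ≤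
        (ℓ : ℝ) * D + ℓ + (ℓ : ℝ) * m := by
      calc ((s * D + (s + 1) + (s + 1) * (m - 1) : ℕ) : ℝ)
          ≤ ((ℓ * D + ℓ + ℓ * m : ℕ) : ℝ) := by exact_mod_cast hbadn
        _ = (ℓ : ℝ) * D + ℓ + (ℓ : ℝ) * m := by push_cast; ring
    linarith
  -- the union of extensions
  classical
  have hsubset : (Good G D u s).biUnion (fun q => (Ext G D s q).image (fun v => (Fin.snoc q v : Fin (s + 2) → V)))
      ⊆ Good G D u (s + 1) := by
    intro p hp
    simp only [mem_biUnion, mem_image] at hp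
    obtain ⟨q, hq, v, hv, rfl⟩ := hp
    exact snoc_mem_good G D u hq hv
  have hdisj : ∀ q ∈ Good G D u s, ∀ q' ∈ Good G D u s, q ≠ q' →
      Disjoint ((Ext G D s q).image (fun v => (Fin.snoc q v : Fin (s + 2) → V)))
        ((Ext G D s q').image (fun v => (Fin.snoc q' v : Fin (s + 2) → V))) := by
    intro q _ q' _ hne
    rw [Finset.disjoint_left]
    intro p hp hp'
    simp only [mem_image] at hp hp'
    obtain ⟨v, _, rfl⟩ := hp
    obtain ⟨v', _, h⟩ := hp'
    apply hne
    funext i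
    have := congrFun h i.castSucc
    simpa [Fin.snoc_castSucc] using this.symm
  have himg : ∀ q : Fin (s + 1) → V,
      ((Ext G D s q).image (fun v => (Fin.snoc q v : Fin (s + 2) → V))).card = (Ext G D s q).card := by
    intro q
    refine card_image_of_injective _ (fun a b h => ?_)
    simpa [Fin.snoc_last] using congrFun h (Fin.last (s + 1))
  have hcard : ∑ q ∈ Good G D u s, (Ext G D s q).card ≤ (Good G D u (s + 1)).card := by
    calc ∑ q ∈ Good G D u s, (Ext G D s q).card
        = ∑ q ∈ Good G D u s, ((Ext G D s q).image (fun v => (Fin.snoc q v : Fin (s + 2) → V))).card := by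
          simp [himg]
      _ = ((Good G D u s).biUnion (fun q => (Ext G D s q).image (fun v => (Fin.snoc q v : Fin (s + 2) → V)))).card :=
          (Finset.card_biUnion hdisj).symm
      _ ≤ _ := card_le_card hsubset
  have h1 : ((Good G D u s).card : ℝ) • (δ / 2) ≤ ∑ q ∈ Good G D u s, ((Ext G D s q).card : ℝ) := by
    have := Finset.card_nsmul_le_sum (Good G D u s) (fun q => ((Ext G D s q).card : ℝ)) (δ / 2) hext
    simpa using this
  have h2 : (∑ q ∈ Good G D u s, ((Ext G D s q).card : ℝ)) ≤ ((Good G D u (s + 1)).card : ℝ) := by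
    rw [← Nat.cast_sum]
    exact_mod_cast hcard
  rw [smul_eq_mul] at h1
  linarith

end MIPaux

theorem many_induced_paths {V : Type*} [Fintype V] [DecidableEq V]
    (G : SimpleGraph V) [DecidableRel G.Adj] (D m ℓ : ℕ) (δ : ℝ)
    (hX : ∀ u : V,
      ({v : V | v ≠ u ∧ D < (G.neighborFinset u ∩ G.neighborFinset v).card} : Set V).ncard < m)
    (hdeg : ∀ v : V, δ ≤ (G.degree v : ℝ))
    (hδ : 2 * ((ℓ : ℝ) * D + (ℓ : ℝ) * m + ℓ + 1) ≤ δ) :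
    ∀ u : V, ∀ s : ℕ, 1 ≤ s → s ≤ ℓ →
      (δ / 2) ^ s ≤
        (Nat.card {p : Fin (s + 1) → V // p 0 = u ∧ IsInducedPath G s p} : ℝ) := by
  intro u s hs1 hs2
  classical
  have hδ0 : (0 : ℝ) ≤ δ / 2 := by
    have h0 : (0 : ℝ) ≤ (ℓ : ℝ) * D + (ℓ : ℝ) * m + ℓ + 1 := by positivity
    linarith
  have main : ∀ t : ℕ, t ≤ ℓ → (δ / 2) ^ t ≤ ((MIPaux.Good G D u t).card : ℝ) := by
    intro t
    induction t with
    | zero =>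
      intro _
      have hmem : (fun _ => u : Fin 1 → V) ∈ MIPaux.Good G D u 0 := by
        simp only [MIPaux.Good, MIPaux.GoodPred, mem_filter, mem_univ, true_and]
        refine ⟨⟨fun a b _ => Fin.ext (by omega), fun i => i.elim0, ?_⟩, ?_⟩
        · intro i j hij
          have hi := i.isLt; have hj := j.isLt
          exact absurd hij (by omega)
        · intro i hi
          exact absurd (Fin.ext (by omega) : i = Fin.last 0) hi
      have h1 : 1 ≤ (MIPaux.Good G D u 0).card := card_pos.mpr ⟨_, hmem⟩
      have : (1 : ℝ) ≤ ((MIPaux.Good G D u 0).card : ℝ) := by exact_mod_cast h1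
      simpa using this
    | succ t ih =>
      intro ht
      have h1 := ih (by omega)
      have h2 := MIPaux.step G D u hX hdeg hδ (s := t) ht
      calc (δ / 2) ^ (t + 1) = (δ / 2) * (δ / 2) ^ t := by ring
        _ ≤ (δ / 2) * ((MIPaux.Good G D u t).card : ℝ) :=
            mul_le_mul_of_nonneg_left h1 hδ0
        _ ≤ _ := h2
  have hgood := main s hs2
  have hsub : MIPaux.Good G D u s ⊆
      univ.filter (fun p : Fin (s + 1) → V => p 0 = u ∧ IsInducedPath G s p) := by
    intro p hp
    simp only [MIPaux.Good, MIPaux.GoodPred, mem_filter, mem_univ, true_and] at hp ⊢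
    exact ⟨hp.1, hp.2.1⟩
  have hcard : Nat.card {p : Fin (s + 1) → V // p 0 = u ∧ IsInducedPath G s p}
      = (univ.filter (fun p : Fin (s + 1) → V => p 0 = u ∧ IsInducedPath G s p)).card := by
    rw [Nat.card_eq_fintype_card, Fintype.card_subtype]
  rw [hcard]
  exact le_trans hgood (by exact_mod_cast card_le_card hsub)
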